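/- Let $1 < q < 2$, let $v_n^{(1)} \to w$ strongly in $L^q(B_r)$ for every $r > 0$ (i.e. $1_{B_r}v_n^{(1)} \to 1_{B_r}w$ in $L^q(\mathbb{R}^N)$), let $w \in L^q(\mathbb{R}^N)$, and set $v_n^{(2)} = v_n^{(1)} - w$. Then $|v_n^{(2)}|^{q-2}v_n^{(2)} - |v_n^{(1)}|^{q-2}v_n^{(1)} + |w|^{q-2}w \to 0$ strongly in $L^{q/(q-1)}(\mathbb{R}^N)$ as $n \to \infty$. -/

import Mathlib

open MeasureTheory Filter

noncomputable section


def phi (q t : ℝ) : ℝ := |t| ^ (q - 2) * t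

lemma phi_neg (q t : ℝ) : phi q (-t) = - phi q t := by
  simp [phi]

lemma phi_of_nonneg {q : ℝ} (hq1 : 1 < q) (hq2 : q < 2) {t : ℝ} (ht : 0 ≤ t) :
    phi q t = t ^ (q - 1) := by
  rcases eq_or_lt_of_le ht with h | h
  · simp [phi, ← h, Real.zero_rpow (by linarith : q - (1:ℝ) ≠ 0)]
  · rw [phi, abs_of_pos h, ← Real.rpow_add_one h.ne' (q-2)]
    congr 1; ring

lemma phi_abs {q : ℝ} (hq1 : 1 < q) (hq2 : q < 2) (t : ℝ) :
    |phi q t| = |t| ^ (q - 1) := by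
  by_cases ht : t = 0
  · simp [phi, ht, Real.zero_rpow (by linarith : q - (1:ℝ) ≠ 0)]
  · rw [phi, abs_mul, abs_of_nonneg (Real.rpow_nonneg (abs_nonneg t) _),
      ← Real.rpow_add_one (by simpa using ht : |t| ≠ 0) (q-2)]
    congr 1; ring

lemma measurable_phi (q : ℝ) : Measurable (phi q) := by
  have h : phi q = fun t => if t = 0 then 0 else Real.exp (Real.log |t| * (q-2)) * t := by
    funext t
    by_cases ht : t = 0
    · simp [phi, ht]
    · rw [if_neg ht, phi, Real.rpow_def_of_pos (abs_pos.mpr ht)]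
  rw [h]
  have hs : MeasurableSet {t : ℝ | t = 0} := by
    simpa [Set.setOf_eq_eq_singleton] using (measurableSet_singleton (0:ℝ))
  exact Measurable.ite hs measurable_const
    (((Real.measurable_log.comp measurable_abs).mul measurable_const).exp.mul measurable_id)

lemma rpow_subadd {α : ℝ} (h0 : 0 < α) (h1 : α ≤ 1) {x y : ℝ} (hx : 0 ≤ x) (hy : 0 ≤ y) :
    (x + y) ^ α ≤ x ^ α + y ^ α := by
  have h := NNReal.rpow_add_rpow_le x.toNNReal y.toNNReal h0 h1
  simp only [NNReal.rpow_one, one_div_one] at h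
  have h2 : (x.toNNReal + y.toNNReal) ^ α ≤ ((x.toNNReal ^ α + y.toNNReal ^ α) ^ (1/α)) ^ α :=
    NNReal.rpow_le_rpow h h0.le
  rw [← NNReal.rpow_mul, one_div, inv_mul_cancel₀ h0.ne', NNReal.rpow_one] at h2
  have := NNReal.coe_le_coe.mpr h2
  push_cast at this
  rwa [Real.coe_toNNReal x hx, Real.coe_toNNReal y hy] at this
section X
variable {q : ℝ}


lemma phi_eq_neg (q t : ℝ) : phi q t = - phi q (-t) := by simp [phi_neg]

lemma two_rpow_lt {a α : ℝ} (h0 : 0 < α) (h1 : α < 1) (ha : 0 < a) :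
    (2*a) ^ α < 2 * a ^ α := by
  rw [Real.mul_rpow (by norm_num) ha.le]
  have h2 : (2:ℝ) ^ α < 2 ^ (1:ℝ) := Real.rpow_lt_rpow_of_exponent_lt (by norm_num) h1
  rw [Real.rpow_one] at h2
  exact mul_lt_mul_of_pos_right h2 (Real.rpow_pos_of_pos ha α)

lemma concA (hq1 : 1 < q) (hq2 : q < 2) {a b : ℝ} (ha : 0 < a) (hb : 0 < b) :
    phi q (a - b) + phi q (a + b) < 2 * a ^ (q - 1) := by
  have h0 : 0 < q - 1 := by linarith
  have h1 : q - 1 < 1 := by linarith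
  rcases lt_trichotomy b a with h | h | h
  · rw [phi_of_nonneg hq1 hq2 (by linarith : (0:ℝ) ≤ a - b),
      phi_of_nonneg hq1 hq2 (by linarith : (0:ℝ) ≤ a + b)]
    have SC := (Real.strictConcaveOn_rpow h0 h1).2
      (Set.mem_Ici.mpr (by linarith : (0:ℝ) ≤ a - b))
      (Set.mem_Ici.mpr (by linarith : (0:ℝ) ≤ a + b))
      (by intro hh; nlinarith) (by norm_num : (0:ℝ) < 1/2) (by norm_num : (0:ℝ) < 1/2)
      (by norm_num)
    simp only [smul_eq_mul] at SC
    have hmid : (1:ℝ)/2 * (a - b) + 1/2 * (a + b) = a := by ring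
    rw [hmid] at SC
    linarith
  · subst h
    simp only [sub_self]
    have : phi q 0 = 0 := by simp [phi]
    rw [this, zero_add]
    have h2a : phi q (b + b) = (2*b) ^ (q-1) := by
      rw [phi_of_nonneg hq1 hq2 (by linarith : (0:ℝ) ≤ b + b)]; ring_nf
    rw [h2a]
    have := two_rpow_lt h0 h1 hb
    linarith
  · have hab : a - b = -(b - a) := by ring
    rw [hab, phi_neg, phi_of_nonneg hq1 hq2 (by linarith : (0:ℝ) ≤ b - a),
      phi_of_nonneg hq1 hq2 (by linarith : (0:ℝ) ≤ a + b)]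
    have hsum : a + b = (b - a) + 2*a := by ring
    have hsub := rpow_subadd h0 h1.le (by linarith : (0:ℝ) ≤ b - a) (by linarith : (0:ℝ) ≤ 2*a)
    rw [← hsum] at hsub
    have := two_rpow_lt h0 h1 ha
    linarith

lemma gpgm_lt (hq1 : 1 < q) (hq2 : q < 2) {a b : ℝ} (ha : 0 < a) (hb : 0 < b) :
    (phi q (a - b) - phi q a + phi q b)^2 < (phi q (a + b) - phi q a - phi q b)^2 := by
  set gp := phi q (a - b) - phi q a + phi q b with hgp
  set gm := phi q (a + b) - phi q a - phi q b with hgm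
  have h1 : gp + gm < 0 := by
    have := concA hq1 hq2 ha hb
    have hpa : phi q a = a ^ (q-1) := phi_of_nonneg hq1 hq2 ha.le
    rw [hgp, hgm, hpa]; linarith
  have h2 : gm < gp := by
    have := concA hq1 hq2 hb ha
    have hpb : phi q b = b ^ (q-1) := phi_of_nonneg hq1 hq2 hb.le
    have hba : b - a = -(a - b) := by ring
    rw [hba, phi_neg] at this
    have hba2 : b + a = a + b := by ring
    rw [hba2] at this
    rw [hgp, hgm, hpb]; linarith
  nlinarith [mul_pos (by linarith : 0 < -(gp + gm)) (by linarith : 0 < gp - gm)]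

lemma hoelder_aux (hq1 : 1 < q) (hq2 : q < 2) {a b : ℝ} (hba : b ≤ a) :
    |phi q a - phi q b| ≤ 2 * |a - b| ^ (q - 1) := by
  have h0 : 0 < q - 1 := by linarith
  have h1 : q - 1 ≤ 1 := by linarith
  have habs : |a - b| = a - b := abs_of_nonneg (by linarith)
  by_cases hb : 0 ≤ b
  · have ha : 0 ≤ a := le_trans hb hba
    rw [phi_of_nonneg hq1 hq2 ha, phi_of_nonneg hq1 hq2 hb, habs]
    have hmono : b ^ (q-1) ≤ a ^ (q-1) := Real.rpow_le_rpow hb hba h0.le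
    rw [abs_of_nonneg (by linarith)]
    have hsub := rpow_subadd h0 h1 (by linarith : (0:ℝ) ≤ a - b) hb
    have he : a - b + b = a := by ring
    rw [he] at hsub
    have : (0:ℝ) ≤ (a-b)^(q-1) := Real.rpow_nonneg (by linarith) _
    linarith
  · push_neg at hb
    by_cases ha : 0 < a
    · -- b < 0 < a
      rw [phi_of_nonneg hq1 hq2 ha.le]
      have hpb : phi q b = -((-b) ^ (q-1)) := by
        rw [phi_eq_neg, phi_of_nonneg hq1 hq2 (by linarith : (0:ℝ) ≤ -b)]
      rw [hpb, habs]
      have g1 : a ^ (q-1) ≤ (a - b)^(q-1) := Real.rpow_le_rpow ha.le (by linarith) h0.le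
      have g2 : (-b) ^ (q-1) ≤ (a - b)^(q-1) := Real.rpow_le_rpow (by linarith) (by linarith) h0.le
      have g3 : (0:ℝ) ≤ a ^ (q-1) := Real.rpow_nonneg ha.le _
      have g4 : (0:ℝ) ≤ (-b) ^ (q-1) := Real.rpow_nonneg (by linarith) _
      rw [abs_of_nonneg (by linarith)]
      linarith
    · -- b ≤ a ≤ 0
      push_neg at ha
      have hpa : phi q a = -phi q (-a) := phi_eq_neg q a
      have hpb : phi q b = -phi q (-b) := phi_eq_neg q b
      have key : |phi q (-b) - phi q (-a)| ≤ 2 * |(-b) - (-a)| ^ (q-1) := by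
        -- reuse nonneg case: 0 ≤ -a ≤ -b
        have hb' : 0 ≤ -a := by linarith
        have hba' : -a ≤ -b := by linarith
        rw [phi_of_nonneg hq1 hq2 (le_trans hb' hba'), phi_of_nonneg hq1 hq2 hb',
          abs_of_nonneg (by linarith : (0:ℝ) ≤ -b - -a)]
        have hmono : (-a) ^ (q-1) ≤ (-b) ^ (q-1) := Real.rpow_le_rpow hb' hba' h0.le
        rw [abs_of_nonneg (by linarith)]
        have hsub := rpow_subadd h0 h1 (by linarith : (0:ℝ) ≤ -b - -a) hb'
        have he : -b - -a + -a = -b := by ring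
        rw [he] at hsub
        have : (0:ℝ) ≤ (-b - -a)^(q-1) := Real.rpow_nonneg (by linarith) _
        linarith
      have e1 : |phi q a - phi q b| = |phi q (-b) - phi q (-a)| := by
        rw [hpa, hpb]
        have : -phi q (-a) - -phi q (-b) = phi q (-b) - phi q (-a) := by ring
        rw [this]
      have e2 : |(-b) - (-a)| = |a - b| := by
        congr 1; ring
      rw [e1, ← e2]; exact key

lemma hoelder (hq1 : 1 < q) (hq2 : q < 2) (a b : ℝ) :
    |phi q a - phi q b| ≤ 2 * |a - b| ^ (q - 1) := by
  rcases le_total b a with h | h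
  · exact hoelder_aux hq1 hq2 h
  · rw [abs_sub_comm, abs_sub_comm a b]
    exact hoelder_aux hq1 hq2 h
end X


section Y
variable {q : ℝ}

lemma Fsq_pos (hu : (0:ℝ) < u * c) :
    (phi q (u - c) - phi q u + phi q c)^2
      = (phi q (|u| - |c|) - phi q |u| + phi q |c|)^2 := by
  rcases lt_or_ge 0 u with hu' | hu'
  · have hc' : 0 < c := by nlinarith
    rw [abs_of_pos hu', abs_of_pos hc']
  · have hu'' : u < 0 := lt_of_le_of_ne hu' (by rintro rfl; simp at hu)
    have hc' : c < 0 := by nlinarith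
    rw [abs_of_neg hu'', abs_of_neg hc']
    have e : -u - -c = -(u - c) := by ring
    rw [e, phi_neg, phi_eq_neg q u, phi_eq_neg q c]
    ring
lemma Fsq_neg (hu : u * c < (0:ℝ)) :
    (phi q (u - c) - phi q u + phi q c)^2
      = (phi q (|u| + |c|) - phi q |u| - phi q |c|)^2 := by
  rcases lt_or_ge 0 u with hu' | hu'
  · have hc' : c < 0 := by nlinarith
    rw [abs_of_pos hu', abs_of_neg hc']
    have e : u - c = u + -c := by ring
    rw [e, phi_eq_neg q c]
    ring
  · have hu'' : u < 0 := lt_of_le_of_ne hu' (by rintro rfl; simp at hu)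
    have hc' : 0 < c := by nlinarith
    rw [abs_of_neg hu'', abs_of_pos hc']
    have e : -u + c = -(u - c) := by ring
    rw [e, phi_neg, phi_eq_neg q u]
    ring

/-- Key measurability rigidity: if `|u|`, `|c|` and the square of
`φ(u-c) - φ(u) + φ(c)` are a.e. measurable, then so is `u * c`. -/
lemma aemeasurable_mul (hq1 : 1 < q) (hq2 : q < 2) {X : Type*} [MeasurableSpace X]
    {μ : Measure X} {u c : X → ℝ}
    (hu : AEMeasurable (fun x => |u x|) μ) (hc : AEMeasurable (fun x => |c x|) μ)
    (hF : AEMeasurable (fun x => (phi q (u x - c x) - phi q (u x) + phi q (c x))^2) μ) :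
    AEMeasurable (fun x => u x * c x) μ := by
  obtain ⟨R₁, hR₁m, hR₁e⟩ := hu
  obtain ⟨R₂, hR₂m, hR₂e⟩ := hc
  obtain ⟨H, hHm, hHe⟩ := hF
  set gp : X → ℝ := fun x => phi q (R₁ x - R₂ x) - phi q (R₁ x) + phi q (R₂ x) with hgp
  set gm : X → ℝ := fun x => phi q (R₁ x + R₂ x) - phi q (R₁ x) - phi q (R₂ x) with hgm
  have hgpm : Measurable gp :=
    (((measurable_phi q).comp (hR₁m.sub hR₂m)).sub ((measurable_phi q).comp hR₁m)).add
      ((measurable_phi q).comp hR₂m)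
  have hgmm : Measurable gm :=
    (((measurable_phi q).comp (hR₁m.add hR₂m)).sub ((measurable_phi q).comp hR₁m)).sub
      ((measurable_phi q).comp hR₂m)
  set Φ : X → ℝ := fun x =>
    if R₁ x ≠ 0 ∧ R₂ x ≠ 0 then
      (if H x < ((gp x)^2 + (gm x)^2)/2 then R₁ x * R₂ x else -(R₁ x * R₂ x))
    else 0 with hΦ
  have hΦm : Measurable Φ := by
    apply Measurable.ite
    · have h1 : MeasurableSet {x | R₁ x ≠ 0} := (hR₁m (measurableSet_singleton 0)).compl
      have h2 : MeasurableSet {x | R₂ x ≠ 0} := (hR₂m (measurableSet_singleton 0)).compl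
      exact h1.inter h2
    · apply Measurable.ite
      · exact measurableSet_lt hHm (((hgpm.pow measurable_const).add
          (hgmm.pow measurable_const)).div measurable_const)
      · exact hR₁m.mul hR₂m
      · exact (hR₁m.mul hR₂m).neg
    · exact measurable_const
  refine ⟨Φ, hΦm, ?_⟩
  filter_upwards [hR₁e, hR₂e, hHe] with x e₁ e₂ e₃
  simp only [hΦ]
  by_cases hu0 : u x = 0
  · rw [if_neg]
    · simp [hu0]
    · rw [← e₁]; simp [hu0]
  by_cases hc0 : c x = 0
  · rw [if_neg]
    · simp [hc0]
    · rw [← e₂]; simp [hc0]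
  rw [if_pos (by rw [← e₁, ← e₂]; exact ⟨by simpa using hu0, by simpa using hc0⟩)]
  have hlt : (phi q (|u x| - |c x|) - phi q |u x| + phi q |c x|)^2
      < (phi q (|u x| + |c x|) - phi q |u x| - phi q |c x|)^2 :=
    gpgm_lt hq1 hq2 (abs_pos.mpr hu0) (abs_pos.mpr hc0)
  have hgpx : gp x = phi q (|u x| - |c x|) - phi q |u x| + phi q |c x| := by
    simp only [hgp, ← e₁, ← e₂]
  have hgmx : gm x = phi q (|u x| + |c x|) - phi q |u x| - phi q |c x| := by
    simp only [hgm, ← e₁, ← e₂]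
  rcases lt_trichotomy (u x * c x) 0 with hs | hs | hs
  · -- opposite signs: H x = gm x ^ 2 ≥ midpoint, takes else branch
    have hH : H x = (gm x)^2 := by rw [← e₃, hgmx]; exact Fsq_neg hs
    rw [if_neg (by rw [hH, hgpx, hgmx]; push_neg; nlinarith), ← e₁, ← e₂,
      ← abs_mul, abs_of_neg hs]
    ring
  · exact absurd hs (mul_ne_zero hu0 hc0)
  · have hH : H x = (gp x)^2 := by rw [← e₃, hgpx]; exact Fsq_pos hs
    rw [if_pos (by rw [hH, hgpx, hgmx]; nlinarith), ← e₁, ← e₂, ← abs_mul, abs_of_pos hs]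
end Y


section Z
variable {q : ℝ} {X : Type*} [MeasurableSpace X] {μ : Measure X}

lemma aemeas_abs_of_rpow {s : ℝ} (hs : 0 < s) {f : X → ℝ}
    (h : AEMeasurable (fun x => |f x| ^ s) μ) : AEMeasurable (fun x => |f x|) μ := by
  have he : (fun x => |f x|) = fun x => (|f x| ^ s) ^ s⁻¹ :=
    funext fun x => (Real.rpow_rpow_inv (abs_nonneg _) hs.ne').symm
  rw [he]
  exact (Real.continuous_rpow_const (inv_nonneg.mpr hs.le)).measurable.comp_aemeasurable h

lemma F_le_v2 (hq1 : 1 < q) (hq2 : q < 2) (u c : ℝ) :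
    |phi q (u - c) - phi q u + phi q c| ≤ 3 * |u - c| ^ (q - 1) := by
  have h1 : phi q (u-c) - phi q u + phi q c = phi q (u-c) - (phi q u - phi q c) := by ring
  rw [h1]
  calc |phi q (u-c) - (phi q u - phi q c)| ≤ |phi q (u-c)| + |phi q u - phi q c| := by
        rw [sub_eq_add_neg]; exact (abs_add_le _ _).trans (by rw [abs_neg])
    _ ≤ |u - c| ^ (q-1) + 2 * |u - c| ^ (q-1) := by
        have := hoelder hq1 hq2 u c
        rw [phi_abs hq1 hq2]
        linarith
    _ = 3 * |u - c| ^ (q-1) := by ring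

lemma F_le_w (hq1 : 1 < q) (hq2 : q < 2) (u c : ℝ) :
    |phi q (u - c) - phi q u + phi q c| ≤ 3 * |c| ^ (q - 1) := by
  calc |phi q (u-c) - phi q u + phi q c| ≤ |phi q (u-c) - phi q u| + |phi q c| := abs_add_le _ _
    _ ≤ 2 * |(u - c) - u| ^ (q-1) + |c| ^ (q-1) := by
        have := hoelder hq1 hq2 (u-c) u
        rw [phi_abs hq1 hq2]
        linarith
    _ ≤ 3 * |c| ^ (q-1) := by
        have he : (u - c) - u = -c := by ring
        rw [he, abs_neg]
        have : (0:ℝ) ≤ |c| ^ (q-1) := Real.rpow_nonneg (abs_nonneg _) _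
        linarith

lemma pow_bound (hq1 : 1 < q) (hq2 : q < 2) {F t : ℝ} (ht : 0 ≤ t)
    (h : |F| ≤ 3 * t ^ (q-1)) :
    |F| ^ (q/(q-1)) ≤ 3 ^ (q/(q-1)) * t ^ q := by
  have hp : (0:ℝ) ≤ q/(q-1) := div_nonneg (by linarith) (by linarith)
  calc |F| ^ (q/(q-1)) ≤ (3 * t ^ (q-1)) ^ (q/(q-1)) :=
        Real.rpow_le_rpow (abs_nonneg F) h hp
    _ = 3 ^ (q/(q-1)) * (t ^ (q-1)) ^ (q/(q-1)) :=
        Real.mul_rpow (by norm_num) (Real.rpow_nonneg ht _)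
    _ = 3 ^ (q/(q-1)) * t ^ q := by
        rw [← Real.rpow_mul ht]
        have hne : q - 1 ≠ 0 := by linarith
        have he : (q-1) * (q/(q-1)) = q := by field_simp
        rw [he]

lemma add_rpow_le (hq : 0 ≤ q) {x y : ℝ} (hx : 0 ≤ x) (hy : 0 ≤ y) :
    (x + y) ^ q ≤ 2 ^ q * (x ^ q + y ^ q) := by
  rcases le_total x y with h | h
  · calc (x+y)^q ≤ (2*y)^q := Real.rpow_le_rpow (by linarith) (by linarith) hq
      _ = 2^q * y^q := Real.mul_rpow (by norm_num) hy
      _ ≤ 2^q * (x^q + y^q) := by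
          have h1 : (0:ℝ) ≤ x^q := Real.rpow_nonneg hx _
          have h2 : (0:ℝ) ≤ (2:ℝ)^q := Real.rpow_nonneg (by norm_num) _
          nlinarith
  · calc (x+y)^q ≤ (2*x)^q := Real.rpow_le_rpow (by linarith) (by linarith) hq
      _ = 2^q * x^q := Real.mul_rpow (by norm_num) hx
      _ ≤ 2^q * (x^q + y^q) := by
          have h1 : (0:ℝ) ≤ y^q := Real.rpow_nonneg hy _
          have h2 : (0:ℝ) ≤ (2:ℝ)^q := Real.rpow_nonneg (by norm_num) _
          nlinarith
end Z


theorem stmt_15 {N : ℕ} (hN : 2 ≤ N) (q : ℝ) (hq1 : 1 < q) (hq2 : q < 2)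
    (v₁ : ℕ → EuclideanSpace ℝ (Fin N) → ℝ)
    (w : EuclideanSpace ℝ (Fin N) → ℝ)
    (hw : Integrable (fun x => |w x| ^ q) (volume : Measure (EuclideanSpace ℝ (Fin N))))
    (hv₁int : ∀ n, Integrable (fun x => |v₁ n x| ^ q)
      (volume : Measure (EuclideanSpace ℝ (Fin N))))
    (hloc : ∀ r : ℝ, 0 < r →
      Filter.Tendsto (fun n => ∫ x in Metric.ball (0 : EuclideanSpace ℝ (Fin N)) r,
        |v₁ n x - w x| ^ q) Filter.atTop (nhds 0)) :
    Filter.Tendsto (fun n => ∫ x,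
        |(|v₁ n x - w x| ^ (q - 2) * (v₁ n x - w x)
          - |v₁ n x| ^ (q - 2) * v₁ n x
          + |w x| ^ (q - 2) * w x)| ^ (q / (q - 1)))
      Filter.atTop (nhds 0) := by
  classical
  show Filter.Tendsto (fun n => ∫ x,
      |phi q (v₁ n x - w x) - phi q (v₁ n x) + phi q (w x)| ^ (q / (q - 1)))
    Filter.atTop (nhds 0)
  have hq1' : (0:ℝ) < q - 1 := by linarith
  have hqpos : (0:ℝ) < q := by linarith
  have hppos : (0:ℝ) < q / (q - 1) := div_pos hqpos hq1'
  have h3p : (0:ℝ) < (3:ℝ) ^ (q / (q - 1)) := Real.rpow_pos_of_pos (by norm_num) _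
  have hwm : AEMeasurable (fun x => |w x|)
      (volume : Measure (EuclideanSpace ℝ (Fin N))) :=
    aemeas_abs_of_rpow hqpos hw.aestronglyMeasurable.aemeasurable
  have hvm : ∀ n, AEMeasurable (fun x => |v₁ n x|)
      (volume : Measure (EuclideanSpace ℝ (Fin N))) :=
    fun n => aemeas_abs_of_rpow hqpos (hv₁int n).aestronglyMeasurable.aemeasurable
  have hFnn : ∀ n, (0:ℝ) ≤ ∫ x,
      |phi q (v₁ n x - w x) - phi q (v₁ n x) + phi q (w x)| ^ (q / (q - 1)) :=
    fun n => integral_nonneg fun x => Real.rpow_nonneg (abs_nonneg _) _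
  -- monotone family of balls
  set s : ℕ → Set (EuclideanSpace ℝ (Fin N)) := fun k => Metric.ball 0 ((k:ℝ)+1) with hs
  have hsm : ∀ k, MeasurableSet (s k) := fun k => measurableSet_ball
  have hmono : Monotone s := fun i j hij =>
    Metric.ball_subset_ball (by exact_mod_cast add_le_add_left (Nat.cast_le.mpr hij) 1)
  have hunion : (⋃ k, s k) = Set.univ := by
    ext x
    simp only [Set.mem_iUnion, Set.mem_univ, iff_true, hs, Metric.mem_ball]
    obtain ⟨k, hk⟩ := exists_nat_gt (dist x 0)
    exact ⟨k, by linarith⟩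
  have htail : Tendsto (fun k => ∫ x in s k, |w x| ^ q) atTop (nhds (∫ x, |w x| ^ q)) := by
    have h := tendsto_setIntegral_of_monotone hsm hmono
      (by rw [hunion]; exact integrableOn_univ.mpr hw)
    rwa [hunion, setIntegral_univ] at h
  -- main ε argument
  rw [Metric.tendsto_atTop]
  intro ε hε
  set δ := ε / (2 * 3 ^ (q / (q - 1))) with hδ
  have hδpos : 0 < δ := div_pos hε (by positivity)
  obtain ⟨k₀, hk₀⟩ := Metric.tendsto_atTop.mp htail δ hδpos
  have htailbound : ∫ x in (s k₀)ᶜ, |w x| ^ q < δ := by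
    have hsplit := integral_add_compl (hsm k₀) hw
    have hk := hk₀ k₀ le_rfl
    rw [Real.dist_eq] at hk
    have := abs_lt.mp hk
    linarith [this.1]
  obtain ⟨N₀, hN₀⟩ := Metric.tendsto_atTop.mp (hloc ((k₀:ℝ)+1) (by positivity)) δ hδpos
  refine ⟨N₀, fun n hn => ?_⟩
  have hvloc : ∫ x in s k₀, |v₁ n x - w x| ^ q < δ := by
    have h := hN₀ n hn
    rw [Real.dist_eq, sub_zero] at h
    calc ∫ x in s k₀, |v₁ n x - w x| ^ q
        ≤ |∫ x in Metric.ball (0 : EuclideanSpace ℝ (Fin N)) ((k₀:ℝ)+1), |v₁ n x - w x| ^ q| :=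
          le_abs_self _
      _ < δ := h
  rw [Real.dist_eq, sub_zero, abs_of_nonneg (hFnn n)]
  by_cases hFi : Integrable (fun x =>
      |phi q (v₁ n x - w x) - phi q (v₁ n x) + phi q (w x)| ^ (q / (q - 1)))
      (volume : Measure (EuclideanSpace ℝ (Fin N)))
  swap
  · rw [integral_undef hFi]; exact hε
  -- measurability of |v₁ n - w|
  have hFabs : AEMeasurable (fun x => |phi q (v₁ n x - w x) - phi q (v₁ n x) + phi q (w x)|)
      (volume : Measure (EuclideanSpace ℝ (Fin N))) :=
    aemeas_abs_of_rpow hppos hFi.aestronglyMeasurable.aemeasurable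
  have hFsq : AEMeasurable (fun x => (phi q (v₁ n x - w x) - phi q (v₁ n x) + phi q (w x))^2)
      (volume : Measure (EuclideanSpace ℝ (Fin N))) := by
    have he : (fun x => (phi q (v₁ n x - w x) - phi q (v₁ n x) + phi q (w x))^2)
        = fun x => |phi q (v₁ n x - w x) - phi q (v₁ n x) + phi q (w x)| ^ 2 :=
      funext fun x => (sq_abs _).symm
    rw [he]
    exact hFabs.pow_const 2
  have hmul : AEMeasurable (fun x => v₁ n x * w x)
      (volume : Measure (EuclideanSpace ℝ (Fin N))) :=
    aemeasurable_mul hq1 hq2 (hvm n) hwm hFsq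
  have hv₂ : AEMeasurable (fun x => |v₁ n x - w x|)
      (volume : Measure (EuclideanSpace ℝ (Fin N))) := by
    have he : (fun x => |v₁ n x - w x|)
        = fun x => Real.sqrt (|v₁ n x|^2 - 2*(v₁ n x * w x) + |w x|^2) := by
      funext x
      rw [show |v₁ n x|^2 - 2*(v₁ n x * w x) + |w x|^2 = (v₁ n x - w x)^2 by
        rw [sq_abs, sq_abs]; ring, Real.sqrt_sq_eq_abs]
    rw [he]
    exact Real.continuous_sqrt.measurable.comp_aemeasurable
      ((((hvm n).pow_const 2).sub (aemeasurable_const.mul hmul)).add (hwm.pow_const 2))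
  have hv₂q : AEMeasurable (fun x => |v₁ n x - w x| ^ q)
      (volume : Measure (EuclideanSpace ℝ (Fin N))) :=
    (Real.continuous_rpow_const hqpos.le).measurable.comp_aemeasurable hv₂
  have hv₂int : Integrable (fun x => |v₁ n x - w x| ^ q)
      (volume : Measure (EuclideanSpace ℝ (Fin N))) := by
    refine Integrable.mono' (((hv₁int n).add hw).const_mul (2 ^ q))
      hv₂q.aestronglyMeasurable (Filter.Eventually.of_forall fun x => ?_)
    rw [Real.norm_eq_abs, abs_of_nonneg (Real.rpow_nonneg (abs_nonneg _) _)]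
    have htri : |v₁ n x - w x| ≤ |v₁ n x| + |w x| := by
      rw [sub_eq_add_neg]
      exact (abs_add_le _ _).trans (le_of_eq (by rw [abs_neg]))
    calc |v₁ n x - w x| ^ q ≤ (|v₁ n x| + |w x|) ^ q :=
          Real.rpow_le_rpow (abs_nonneg _) htri hqpos.le
      _ ≤ 2 ^ q * (|v₁ n x| ^ q + |w x| ^ q) :=
          add_rpow_le hqpos.le (abs_nonneg _) (abs_nonneg _)
  -- split and bound
  have hsplitF := integral_add_compl (hsm k₀) hFi
  have hb1 : ∫ x in s k₀, |phi q (v₁ n x - w x) - phi q (v₁ n x) + phi q (w x)| ^ (q / (q - 1))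
      ≤ 3 ^ (q / (q - 1)) * ∫ x in s k₀, |v₁ n x - w x| ^ q := by
    have h := integral_mono_of_nonneg
      (μ := (volume : Measure (EuclideanSpace ℝ (Fin N))).restrict (s k₀))
      (f := fun x => |phi q (v₁ n x - w x) - phi q (v₁ n x) + phi q (w x)| ^ (q / (q - 1)))
      (g := fun x => 3 ^ (q / (q - 1)) * |v₁ n x - w x| ^ q)
      (Filter.Eventually.of_forall fun x => Real.rpow_nonneg (abs_nonneg _) _)
      ((hv₂int.const_mul _).integrableOn)
      (Filter.Eventually.of_forall fun x =>
        pow_bound hq1 hq2 (abs_nonneg _) (F_le_v2 hq1 hq2 _ _))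
    rwa [integral_const_mul] at h
  have hb2 : ∫ x in (s k₀)ᶜ, |phi q (v₁ n x - w x) - phi q (v₁ n x) + phi q (w x)| ^ (q / (q - 1))
      ≤ 3 ^ (q / (q - 1)) * ∫ x in (s k₀)ᶜ, |w x| ^ q := by
    have h := integral_mono_of_nonneg
      (μ := (volume : Measure (EuclideanSpace ℝ (Fin N))).restrict (s k₀)ᶜ)
      (f := fun x => |phi q (v₁ n x - w x) - phi q (v₁ n x) + phi q (w x)| ^ (q / (q - 1)))
      (g := fun x => 3 ^ (q / (q - 1)) * |w x| ^ q)
      (Filter.Eventually.of_forall fun x => Real.rpow_nonneg (abs_nonneg _) _)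
      ((hw.const_mul _).integrableOn)
      (Filter.Eventually.of_forall fun x =>
        pow_bound hq1 hq2 (abs_nonneg _) (F_le_w hq1 hq2 _ _))
    rwa [integral_const_mul] at h
  have h1 : 3 ^ (q / (q - 1)) * ∫ x in s k₀, |v₁ n x - w x| ^ q < 3 ^ (q / (q - 1)) * δ :=
    mul_lt_mul_of_pos_left hvloc h3p
  have h2 : 3 ^ (q / (q - 1)) * ∫ x in (s k₀)ᶜ, |w x| ^ q < 3 ^ (q / (q - 1)) * δ :=
    mul_lt_mul_of_pos_left htailbound h3p
  have hδe : 3 ^ (q / (q - 1)) * δ = ε / 2 := by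
    rw [hδ]
    field_simp
  linarith

end
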